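/- arXiv:1811.12484 — 2 statements merged into one kernel-verified Lean document; each statement's English description precedes it below -/
import Mathlib

section
/- For vector fields E on a surface S with unit normal ν_S and a C¹ vector field p on ℝ³, the identity ((∇p)ᵀ ν_S) × E = −ν_S × (E × (∇×p)) − ν_S × ((E·∇)p) − (∇p)(ν_S × E) + (∇·p)(ν_S × E) holds pointwise on S. -/
namespace Stmt11

/-- Jacobian entries of a real vector field: `Dp p x i j = ∂ⱼ pᵢ (x)`. -/
noncomputable def Dp (p : (Fin 3 → ℝ) → Fin 3 → ℝ) (x : Fin 3 → ℝ) (i j : Fin 3) : ℝ :=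
  fderiv ℝ (fun y => p y i) x (Pi.single j 1)

/-- Curl of a real vector field on `ℝ³`. -/
noncomputable def curlv (p : (Fin 3 → ℝ) → Fin 3 → ℝ) (x : Fin 3 → ℝ) : Fin 3 → ℝ :=
  ![Dp p x 2 1 - Dp p x 1 2, Dp p x 0 2 - Dp p x 2 0, Dp p x 1 0 - Dp p x 0 1]

/-- Divergence of a real vector field on `ℝ³`. -/
noncomputable def divv (p : (Fin 3 → ℝ) → Fin 3 → ℝ) (x : Fin 3 → ℝ) : ℝ :=
  ∑ i, Dp p x i i

/-- Complex cross product on `ℂ³`. -/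
def crossC (a b : Fin 3 → ℂ) : Fin 3 → ℂ :=
  ![a 1 * b 2 - a 2 * b 1, a 2 * b 0 - a 0 * b 2, a 0 * b 1 - a 1 * b 0]

/-- Coercion of a real vector to `ℂ³`. -/
def cvec (v : Fin 3 → ℝ) : Fin 3 → ℂ := fun i => (v i : ℂ)

/-- The pointwise identity
`((∇p)ᵀ ν) × E = −ν×(E×(∇×p)) − ν×((E·∇)p) − (∇p)(ν×E) + (∇·p)(ν×E)`. -/
theorem stmt_11 (p : (Fin 3 → ℝ) → Fin 3 → ℝ) (x : Fin 3 → ℝ)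
    (hp : DifferentiableAt ℝ p x) (ν : Fin 3 → ℝ) (hν : ∑ i, ν i ^ 2 = 1)
    (E : Fin 3 → ℂ) :
    crossC (fun i => ((∑ j, ν j * Dp p x j i : ℝ) : ℂ)) E
      = - crossC (cvec ν) (crossC E (cvec (curlv p x)))
        - crossC (cvec ν) (fun i => ∑ j, E j * ((Dp p x i j : ℝ) : ℂ))
        - (fun i => ∑ j, ((Dp p x i j : ℝ) : ℂ) * crossC (cvec ν) E j)
        + (divv p x : ℂ) • crossC (cvec ν) E := by
  funext i
  fin_cases i <;>
  · simp [crossC, cvec, curlv, divv, Fin.sum_univ_three, Matrix.vecHead, Matrix.vecTail]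
    ring

end Stmt11
end

section
/- Let κ ∈ ℂ with Im κ > 0, q ∈ ℝ³ with |q| = 1, and let G(x) = (I + κ^{-2}∇∇)(exp(iκ|x|)/(4π|x|)) be the dyadic Green function. Then ‖G(· − x_ε)q‖_{L^∞(S_ε)} → ∞ as ε → 0, where x_ε = x* + ε e₃ for a point x* on a C² surface S and S_ε = S ∩ B_ε(x*). -/
namespace Stmt17

abbrev E3 := EuclideanSpace ℝ (Fin 3)

/-- The fundamental solution `Φ(x) = exp(iκ|x|)/(4π|x|)`. -/
noncomputable def Phi (κ : ℂ) (x : E3) : ℂ :=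
  Complex.exp (Complex.I * κ * (‖x‖ : ℝ)) / ((4 * Real.pi * ‖x‖ : ℝ) : ℂ)

/-- Partial derivative in the `i`-th coordinate direction. -/
noncomputable def pd (i : Fin 3) (g : E3 → ℂ) (x : E3) : ℂ :=
  fderiv ℝ g x (EuclideanSpace.single i (1 : ℝ))

/-- The dyadic Green function `G = (I + κ⁻²∇∇)Φ`, entrywise. -/
noncomputable def GreenD (κ : ℂ) (x : E3) (i j : Fin 3) : ℂ :=
  (if i = j then Phi κ x else 0) + κ ^ (-2 : ℤ) * pd i (fun y => pd j (Phi κ) y) x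

open Complex Real

noncomputable section Aux

/-- radial profile -/
def Frad (κ : ℂ) (r : ℝ) : ℂ := Complex.exp (Complex.I*κ*r) / (4*(Real.pi:ℂ)*(r:ℂ))
def F1 (κ : ℂ) (r : ℝ) : ℂ :=
  Complex.exp (Complex.I*κ*r) * (Complex.I*κ/(4*(Real.pi:ℂ)*r) - 1/(4*(Real.pi:ℂ)*(r:ℂ)^2))
def F2 (κ : ℂ) (r : ℝ) : ℂ :=
  Complex.exp (Complex.I*κ*r) *
    (-κ^2/(4*(Real.pi:ℂ)*r) - 2*Complex.I*κ/(4*(Real.pi:ℂ)*(r:ℂ)^2) + 2/(4*(Real.pi:ℂ)*(r:ℂ)^3))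

def H1 (κ : ℂ) (s : ℝ) : ℂ := (1/(2*Real.sqrt s)) • F1 κ (Real.sqrt s)
def H2 (κ : ℂ) (s : ℝ) : ℂ :=
  (1/(2*Real.sqrt s)) • ((1/(2*Real.sqrt s)) • F2 κ (Real.sqrt s))
    + (-(2*(1/(2*Real.sqrt s)))/(2*Real.sqrt s)^2) • F1 κ (Real.sqrt s)

lemma pi_ne : ((Real.pi : ℂ)) ≠ 0 := by exact_mod_cast Real.pi_ne_zero

lemma he (κ : ℂ) (r : ℝ) :
    HasDerivAt (fun t : ℝ => Complex.exp (Complex.I*κ*t)) (Complex.exp (Complex.I*κ*r) * (Complex.I*κ)) r := by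
  have h0 : HasDerivAt (fun t : ℝ => ((t:ℝ):ℂ)) 1 r := (hasDerivAt_id r).ofReal_comp
  have h1 : HasDerivAt (fun t : ℝ => Complex.I*κ*(t:ℂ)) (Complex.I*κ) r := by
    simpa using h0.const_mul (Complex.I*κ)
  simpa using h1.cexp

lemma hF {κ : ℂ} {r : ℝ} (hr : r ≠ 0) : HasDerivAt (Frad κ) (F1 κ r) r := by
  have h0 : HasDerivAt (fun t : ℝ => ((t:ℝ):ℂ)) 1 r := (hasDerivAt_id r).ofReal_comp
  have hrc : (r:ℂ) ≠ 0 := by exact_mod_cast hr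
  have hden : HasDerivAt (fun t : ℝ => 4*(Real.pi:ℂ)*(t:ℂ)) (4*(Real.pi:ℂ)) r := by
    simpa using h0.const_mul (4*(Real.pi:ℂ))
  have hne : 4*(Real.pi:ℂ)*(r:ℂ) ≠ 0 := by
    simp [pi_ne, hrc, Real.pi_ne_zero]
  have := (he κ r).div hden hne
  unfold Frad F1
  refine this.congr_deriv ?_
  field_simp [hrc, pi_ne]

lemma hF1 {κ : ℂ} {r : ℝ} (hr : r ≠ 0) : HasDerivAt (F1 κ) (F2 κ r) r := by
  have h0 : HasDerivAt (fun t : ℝ => ((t:ℝ):ℂ)) 1 r := (hasDerivAt_id r).ofReal_comp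
  have hrc : (r:ℂ) ≠ 0 := by exact_mod_cast hr
  have hne1 : 4*(Real.pi:ℂ)*(r:ℂ) ≠ 0 := by simp [pi_ne, hrc, Real.pi_ne_zero]
  have hne2 : 4*(Real.pi:ℂ)*(r:ℂ)^2 ≠ 0 := by simp [pi_ne, hrc, Real.pi_ne_zero]
  have hd1 : HasDerivAt (fun t : ℝ => 4*(Real.pi:ℂ)*(t:ℂ)) (4*(Real.pi:ℂ)) r := by
    simpa using h0.const_mul (4*(Real.pi:ℂ))
  have hsq : HasDerivAt (fun t : ℝ => ((t:ℝ):ℂ)^2) (2*(r:ℂ)) r := by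
    have := h0.mul h0
    exact (h0.pow 2).congr_deriv (by norm_num)
  have hd2 : HasDerivAt (fun t : ℝ => 4*(Real.pi:ℂ)*(t:ℂ)^2) (4*(Real.pi:ℂ)*(2*(r:ℂ))) r := by
    simpa [mul_comm, mul_assoc, mul_left_comm] using hsq.const_mul (4*(Real.pi:ℂ))
  have ha : HasDerivAt (fun t : ℝ => Complex.I*κ/(4*(Real.pi:ℂ)*(t:ℂ)))
      (-(Complex.I*κ*(4*(Real.pi:ℂ)))/(4*(Real.pi:ℂ)*(r:ℂ))^2) r := by
    have := (hasDerivAt_const r (Complex.I*κ)).div hd1 hne1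
    refine this.congr_deriv ?_
    field_simp
    ring
  have hb : HasDerivAt (fun t : ℝ => 1/(4*(Real.pi:ℂ)*(t:ℂ)^2))
      (-(4*(Real.pi:ℂ)*(2*(r:ℂ)))/(4*(Real.pi:ℂ)*(r:ℂ)^2)^2) r := by
    have := (hasDerivAt_const r (1:ℂ)).div hd2 hne2
    refine this.congr_deriv ?_
    field_simp
    ring
  have hg := ha.sub hb
  have := (he κ r).mul hg
  unfold F1 F2
  refine this.congr_deriv ?_
  simp only [Pi.sub_apply]
  field_simp [hrc, pi_ne]
  ring_nf
  simp [Complex.I_sq]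
  ring

lemma hH {κ : ℂ} {s : ℝ} (hs : 0 < s) :
    HasDerivAt (fun t => Frad κ (Real.sqrt t)) (H1 κ s) s := by
  have hsq : Real.sqrt s ≠ 0 := by positivity
  have h := (hF (κ := κ) hsq).scomp s (Real.hasDerivAt_sqrt hs.ne')
  exact h

lemma hH1 {κ : ℂ} {s : ℝ} (hs : 0 < s) :
    HasDerivAt (H1 κ) (H2 κ s) s := by
  have hsq : Real.sqrt s ≠ 0 := by positivity
  have hsq2 : 2 * Real.sqrt s ≠ 0 := by positivity
  have hc : HasDerivAt (fun t => 1/(2*Real.sqrt t))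
      (-(2*(1/(2*Real.sqrt s)))/(2*Real.sqrt s)^2) s := by
    have h2s : HasDerivAt (fun t => 2*Real.sqrt t) (2*(1/(2*Real.sqrt s))) s :=
      (Real.hasDerivAt_sqrt hs.ne').const_mul 2
    simpa [one_div, Pi.inv_def] using h2s.inv hsq2
  have hf : HasDerivAt (fun t => F1 κ (Real.sqrt t)) ((1/(2*Real.sqrt s)) • F2 κ (Real.sqrt s)) s := by
    have h := (hF1 (κ := κ) hsq).scomp s (Real.hasDerivAt_sqrt hs.ne')
    exact h
  have := hc.smul hf
  unfold H1 H2
  exact this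


lemma Phi_eq (κ : ℂ) (x : E3) : Phi κ x = Frad κ ‖x‖ := by
  unfold Phi Frad
  push_cast
  ring_nf

lemma Phi_comp (κ : ℂ) : Phi κ = fun x : E3 => Frad κ (Real.sqrt (‖x‖^2)) := by
  funext x
  rw [Real.sqrt_sq (norm_nonneg x)]
  exact Phi_eq κ x

lemma pd_Phi (κ : ℂ) {x : E3} (hx : x ≠ 0) (j : Fin 3) :
    pd j (Phi κ) x = (2 * x j) • H1 κ (‖x‖^2) := by
  have hs : (0:ℝ) < ‖x‖^2 := by
    have := norm_pos_iff.mpr hx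
    positivity
  have hn : HasFDerivAt (fun y : E3 => ‖y‖^2) (2 • (innerSL ℝ x)) x :=
    (hasStrictFDerivAt_norm_sq x).hasFDerivAt
  have h1 : HasDerivAt (fun t => Frad κ (Real.sqrt t)) (H1 κ (‖x‖^2)) (‖x‖^2) := hH hs
  have h2 : HasFDerivAt (Phi κ)
      ((ContinuousLinearMap.smulRight (1 : ℝ →L[ℝ] ℝ) (H1 κ (‖x‖^2))).comp (2 • (innerSL ℝ x))) x := by
    rw [Phi_comp κ]
    exact (hasDerivAt_iff_hasFDerivAt.mp h1).comp x hn
  unfold pd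
  rw [h2.fderiv]
  simp [EuclideanSpace.inner_single_right, real_inner_comm]
  ring

def G1 (κ : ℂ) (j : Fin 3) (y : E3) : ℂ := (2 * y j) • H1 κ (‖y‖^2)

lemma pd2_eq (κ : ℂ) {x : E3} (hx : x ≠ 0) (i j : Fin 3) :
    pd i (fun y => pd j (Phi κ) y) x
      = (2 * x j) • ((2 * x i) • H2 κ (‖x‖^2))
        + (2 * ((EuclideanSpace.single i (1:ℝ) : E3) j)) • H1 κ (‖x‖^2) := by
  have hs : (0:ℝ) < ‖x‖^2 := by
    have := norm_pos_iff.mpr hx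
    positivity
  have hn : HasFDerivAt (fun y : E3 => ‖y‖^2) (2 • (innerSL ℝ x)) x :=
    (hasStrictFDerivAt_norm_sq x).hasFDerivAt
  have hev : (fun y => pd j (Phi κ) y) =ᶠ[nhds x] G1 κ j := by
    filter_upwards [eventually_ne_nhds hx] with y hy using pd_Phi κ hy j
  have hc : HasFDerivAt (fun y : E3 => 2 * (y j))
      ((2:ℝ) • (EuclideanSpace.proj j : E3 →L[ℝ] ℝ)) x := by
    have := (EuclideanSpace.proj (𝕜 := ℝ) j).hasFDerivAt (x := x)
    exact this.const_mul 2
  have hf : HasFDerivAt (fun y : E3 => H1 κ (‖y‖^2))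
      ((ContinuousLinearMap.smulRight (1 : ℝ →L[ℝ] ℝ) (H2 κ (‖x‖^2))).comp (2 • (innerSL ℝ x))) x :=
    HasFDerivAt.comp (g := H1 κ) x (hasDerivAt_iff_hasFDerivAt.mp (hH1 (κ := κ) hs)) hn
  have hG1 : HasFDerivAt (G1 κ j)
      ((2 * x j) • ((ContinuousLinearMap.smulRight (1 : ℝ →L[ℝ] ℝ) (H2 κ (‖x‖^2))).comp (2 • (innerSL ℝ x)))
        + ((2:ℝ) • (EuclideanSpace.proj j : E3 →L[ℝ] ℝ)).smulRight (H1 κ (‖x‖^2))) x := hc.smul hf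
  show fderiv ℝ (fun y => pd j (Phi κ) y) x (EuclideanSpace.single i 1) = _
  rw [hev.fderiv_eq, hG1.fderiv]
  simp [EuclideanSpace.inner_single_right, real_inner_comm, smul_smul]
  exact Or.inl (by ring)


lemma comp_eq (κ : ℂ) {ε : ℝ} (hε : 0 < ε) (q : Fin 3 → ℝ) (i : Fin 3) :
    ∑ j, GreenD κ (-(ε • (EuclideanSpace.single 2 (1:ℝ) : E3))) i j * (q j : ℂ)
      = (q i : ℂ) * (Frad κ ε + κ^(-2:ℤ) * (if i = 2 then F2 κ ε else F1 κ ε / ε)) := by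
  set x : E3 := -(ε • (EuclideanSpace.single 2 (1:ℝ) : E3)) with hxdef
  have hnorm : ‖x‖ = ε := by
    rw [hxdef, norm_neg, norm_smul, EuclideanSpace.norm_single]
    simp [abs_of_pos hε]
  have hx0 : x ≠ 0 := by
    intro h
    rw [h, norm_zero] at hnorm
    exact hε.ne' hnorm.symm
  have hcoord : ∀ j : Fin 3, x j = if j = 2 then -ε else 0 := by
    intro j
    by_cases h : j = 2 <;> simp [hxdef, EuclideanSpace.single_apply, h]
  have hs2 : ‖x‖^2 = ε^2 := by rw [hnorm]
  have hsq : Real.sqrt (ε^2) = ε := Real.sqrt_sq hε.le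
  have hεc : ((ε:ℝ):ℂ) ≠ 0 := by exact_mod_cast hε.ne'
  have hH1v : H1 κ (ε^2) = (1/(2*ε)) • F1 κ ε := by unfold H1; rw [hsq]
  have hH2v : H2 κ (ε^2) = (1/(4*ε^2)) • F2 κ ε + (-1/(4*ε^3)) • F1 κ ε := by
    unfold H2
    rw [hsq, smul_smul]
    congr 2
    · field_simp
      ring
    · field_simp
      ring
  have hG : ∀ i j : Fin 3, GreenD κ x i j
      = (if i = j then Frad κ ε else 0) + κ^(-2:ℤ) *
        ((2 * x j) • ((2 * x i) • H2 κ (ε^2))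
          + (2 * ((EuclideanSpace.single i (1:ℝ) : E3) j)) • H1 κ (ε^2)) := by
    intro i j
    unfold GreenD
    rw [pd2_eq κ hx0, hs2, Phi_eq, hnorm]
  rw [Fin.sum_univ_three, hG, hG, hG, hH1v, hH2v, hcoord, hcoord, hcoord, hcoord]
  generalize (κ^(-2:ℤ) : ℂ) = c
  fin_cases i <;>
    · simp [EuclideanSpace.single_apply, Complex.real_smul]
      push_cast
      field_simp [hεc] <;> ring


set_option maxHeartbeats 1000000 in
lemma Wbound (κ : ℂ) (hκ : 0 < κ.im) {ε : ℝ} (hε : 0 < ε) (hε1 : ε ≤ 1)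
    (hεk : ε * ‖κ‖ ≤ 1/4) (i : Fin 3) :
    Real.exp (-κ.im) / (8*Real.pi*‖κ‖^2) / ε^3
      ≤ ‖Frad κ ε + κ^(-2:ℤ) * (if i = 2 then F2 κ ε else F1 κ ε / ε)‖ := by
  have hκ0 : κ ≠ 0 := by
    intro h; rw [h] at hκ; simp at hκ
  set k := ‖κ‖ with hk
  have hkpos : 0 < k := by simpa [hk] using (norm_pos_iff.mpr hκ0)
  have hεc : ((ε:ℝ):ℂ) ≠ 0 := by exact_mod_cast hε.ne'
  have hre : (Complex.I*κ*(ε:ℂ)).re = -(κ.im*ε) := by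
    simp [Complex.mul_re]
  have habsexp : ‖Complex.exp (Complex.I*κ*(ε:ℂ))‖ = Real.exp (-(κ.im*ε)) := by
    rw [Complex.norm_exp, hre]
  have hexpge : Real.exp (-κ.im) ≤ Real.exp (-(κ.im*ε)) := by
    apply Real.exp_le_exp.mpr
    nlinarith
  have hzp : (κ:ℂ)^(-2:ℤ) = (κ^2)⁻¹ := by
    rw [zpow_neg]
    norm_cast
  have hπc : ((Real.pi:ℝ):ℂ) ≠ 0 := pi_ne
  by_cases hi : i = 2
  · rw [if_pos hi]
    have heq : Frad κ ε + κ^(-2:ℤ) * F2 κ ε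
        = Complex.exp (Complex.I*κ*ε) * (2/(κ^2*(ε:ℂ)^3) - 2*Complex.I/(κ*(ε:ℂ)^2)) * (1/(4*(Real.pi:ℂ))) := by
      rw [hzp]; unfold Frad F2
      field_simp
      ring
    rw [heq, norm_mul, norm_mul, habsexp]
    have habs1 : ‖2/(κ^2*(ε:ℂ)^3)‖ = 2/(k^2*ε^3) := by
      rw [norm_div, norm_mul, norm_pow, norm_pow, Complex.norm_real, Real.norm_eq_abs, abs_of_pos hε]
      norm_num
      rfl
    have habs2 : ‖2*Complex.I/(κ*(ε:ℂ)^2)‖ = 2/(k*ε^2) := by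
      rw [norm_div, norm_mul, norm_mul, norm_pow, Complex.norm_real, Real.norm_eq_abs, abs_of_pos hε,
        Complex.norm_I, Complex.norm_two, mul_one]
    have htri : 2/(k^2*ε^3) - 2/(k*ε^2)
        ≤ ‖2/(κ^2*(ε:ℂ)^3) - 2*Complex.I/(κ*(ε:ℂ)^2)‖ := by
      have h := norm_sub_norm_le (2/(κ^2*(ε:ℂ)^3)) (2*Complex.I/(κ*(ε:ℂ)^2))
      rw [habs1, habs2] at h
      exact h
    have habs3 : ‖1/(4*(Real.pi:ℂ))‖ = 1/(4*Real.pi) := by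
      rw [norm_div, norm_one, norm_mul, Complex.norm_real, Real.norm_eq_abs, abs_of_pos Real.pi_pos]
      norm_num
    rw [habs3]
    have hmid : 1/(2*(k^2*ε^3)) ≤ 2/(k^2*ε^3) - 2/(k*ε^2) := by
      have hp : (0:ℝ) < k^3*ε^5 := by positivity
      rw [div_sub_div _ _ (by positivity) (by positivity),
        div_le_div_iff₀ (by positivity) (by positivity)]
      nlinarith [mul_le_mul_of_nonneg_left hεk hp.le]
    calc Real.exp (-κ.im) / (8*Real.pi*k^2) / ε^3
        = Real.exp (-κ.im) * (1/(2*(k^2*ε^3))) * (1/(4*Real.pi)) := by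
          field_simp
          ring
      _ ≤ Real.exp (-(κ.im*ε)) * (‖2/(κ^2*(ε:ℂ)^3) - 2*Complex.I/(κ*(ε:ℂ)^2)‖) * (1/(4*Real.pi)) := by
          have h2 := le_trans hmid htri
          gcongr
      _ = _ := rfl
  · rw [if_neg hi]
    have heq : Frad κ ε + κ^(-2:ℤ) * (F1 κ ε / ε)
        = Complex.exp (Complex.I*κ*ε) *
            (1/((ε:ℂ)) + Complex.I/(κ*(ε:ℂ)^2) - 1/(κ^2*(ε:ℂ)^3)) * (1/(4*(Real.pi:ℂ))) := by
      rw [hzp]; unfold Frad F1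
      field_simp
      ring
    rw [heq, norm_mul, norm_mul, habsexp]
    have habs1 : ‖1/((ε:ℂ))‖ = 1/ε := by
      rw [norm_div, norm_one, Complex.norm_real, Real.norm_eq_abs, abs_of_pos hε]
    have habs2 : ‖Complex.I/(κ*(ε:ℂ)^2)‖ = 1/(k*ε^2) := by
      rw [norm_div, norm_mul, norm_pow, Complex.norm_real, Real.norm_eq_abs, abs_of_pos hε, Complex.norm_I]
    have habs3 : ‖1/(κ^2*(ε:ℂ)^3)‖ = 1/(k^2*ε^3) := by
      rw [norm_div, norm_one, norm_mul, norm_pow, norm_pow, Complex.norm_real, Real.norm_eq_abs, abs_of_pos hε]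
    have htri : 1/(k^2*ε^3) - 1/ε - 1/(k*ε^2)
        ≤ ‖1/((ε:ℂ)) + Complex.I/(κ*(ε:ℂ)^2) - 1/(κ^2*(ε:ℂ)^3)‖ := by
      set z := 1/((ε:ℂ)) + Complex.I/(κ*(ε:ℂ)^2) - 1/(κ^2*(ε:ℂ)^3) with hz2
      have h1 : ‖1/(κ^2*(ε:ℂ)^3)‖
          ≤ ‖1/((ε:ℂ)) + Complex.I/(κ*(ε:ℂ)^2)‖ + ‖z‖ := by
        have : 1/(κ^2*(ε:ℂ)^3) = (1/((ε:ℂ)) + Complex.I/(κ*(ε:ℂ)^2)) + (-z) := by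
          rw [hz2]; ring
        rw [this]
        simpa using norm_add_le (1/((ε:ℂ)) + Complex.I/(κ*(ε:ℂ)^2)) (-z)
      have h2 := norm_add_le (1/((ε:ℂ))) (Complex.I/(κ*(ε:ℂ)^2))
      rw [habs1, habs2] at h2
      rw [habs3] at h1
      linarith
    have habs4 : ‖1/(4*(Real.pi:ℂ))‖ = 1/(4*Real.pi) := by
      rw [norm_div, norm_one, norm_mul, Complex.norm_real, Real.norm_eq_abs, abs_of_pos Real.pi_pos]
      norm_num
    rw [habs4]
    have hmid : 1/(2*(k^2*ε^3)) ≤ 1/(k^2*ε^3) - 1/ε - 1/(k*ε^2) := by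
      have e1 : 1/ε ≤ 1/(4*(k^2*ε^3)) := by
        rw [div_le_div_iff₀ (by positivity) (by positivity)]
        nlinarith [hεk, hkpos, hε, sq_nonneg (k*ε), mul_pos hkpos hε,
          mul_le_mul_of_nonneg_left hεk (mul_pos hkpos (mul_pos hε hε)).le]
      have e2 : 1/(k*ε^2) ≤ 1/(4*(k^2*ε^3)) := by
        rw [div_le_div_iff₀ (by positivity) (by positivity)]
        nlinarith [mul_le_mul_of_nonneg_left hεk (by positivity : (0:ℝ) ≤ 4*k*ε^2)]
      have e6 : 1/(2*(k^2*ε^3)) + 1/(4*(k^2*ε^3)) + 1/(4*(k^2*ε^3)) = 1/(k^2*ε^3) := by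
        ring
      linarith
    calc Real.exp (-κ.im) / (8*Real.pi*k^2) / ε^3
        = Real.exp (-κ.im) * (1/(2*(k^2*ε^3))) * (1/(4*Real.pi)) := by
          field_simp
          ring
      _ ≤ Real.exp (-(κ.im*ε)) *
            (‖1/((ε:ℂ)) + Complex.I/(κ*(ε:ℂ)^2) - 1/(κ^2*(ε:ℂ)^3)‖) * (1/(4*Real.pi)) := by
          have h2 := le_trans hmid htri
          gcongr
      _ = _ := rfl

end Aux

/-- Blow-up of the dyadic Green function with a dipole source approaching a surface point:
`‖G(· − x_ε)q‖_{L^∞(S_ε)} → ∞` as `ε → 0`, where `x_ε = x* + ε e₃` and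
`S_ε = S ∩ B_ε(x*)`. -/
theorem stmt_17 (κ : ℂ) (hκ : 0 < κ.im) (q : Fin 3 → ℝ) (hq : ∑ i, q i ^ 2 = 1)
    (S : Set E3) (xstar : E3) (hxs : xstar ∈ S) :
    ∀ M : ℝ, ∃ ε₀ > (0 : ℝ), ∀ ε : ℝ, 0 < ε → ε < ε₀ →
      ∃ y ∈ S ∩ Metric.ball xstar ε,
        M ≤ Real.sqrt (∑ i, ‖
          (∑ j, GreenD κ (y - (xstar + ε • EuclideanSpace.single 2 (1 : ℝ))) i j * (q j : ℂ))‖ ^ 2) := by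
  intro M
  have hκ0 : κ ≠ 0 := by
    intro h; rw [h] at hκ; simp at hκ
  set k := ‖κ‖ with hk
  have hkpos : 0 < k := by simpa [hk] using (norm_pos_iff.mpr hκ0)
  set C := Real.exp (-κ.im) / (8*Real.pi*k^2) with hC
  have hCpos : 0 < C := by
    rw [hC]; positivity
  set T := max M 1 with hT
  have hTpos : 0 < T := lt_of_lt_of_le one_pos (le_max_right M 1)
  refine ⟨min (min 1 (1/(4*k))) (C/(2*T)), by positivity, ?_⟩
  intro ε hε hεlt
  refine ⟨xstar, ⟨hxs, Metric.mem_ball_self hε⟩, ?_⟩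
  have hε1 : ε ≤ 1 :=
    le_of_lt (lt_of_lt_of_le hεlt (le_trans (min_le_left _ _) (min_le_left _ _)))
  have hεk : ε * k ≤ 1/4 := by
    have h2 : ε ≤ 1/(4*k) :=
      le_of_lt (lt_of_lt_of_le hεlt (le_trans (min_le_left _ _) (min_le_right _ _)))
    rw [le_div_iff₀ (by positivity)] at h2
    linarith
  have hεT : ε < C/(2*T) := lt_of_lt_of_le hεlt (min_le_right _ _)
  have harg : xstar - (xstar + ε • (EuclideanSpace.single 2 (1:ℝ) : E3))
      = -(ε • (EuclideanSpace.single 2 (1:ℝ) : E3)) := by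
    abel
  rw [harg]
  -- pick a coordinate with a large |q i|
  have hex : ∃ i₀ : Fin 3, 1/3 ≤ q i₀ ^ 2 := by
    by_contra h
    push_neg at h
    rw [Fin.sum_univ_three] at hq
    have h0 := h 0; have h1 := h 1; have h2 := h 2
    linarith
  obtain ⟨i₀, hi₀⟩ := hex
  have hqabs : 1/2 ≤ |q i₀| := by
    nlinarith [abs_nonneg (q i₀), _root_.sq_abs (q i₀)]
  -- the value of the i₀-th component
  set W := Frad κ ε + κ^(-2:ℤ) * (if i₀ = 2 then F2 κ ε else F1 κ ε / ε) with hW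
  have hcomp := comp_eq κ hε q i₀
  have hWb : C / ε^3 ≤ ‖W‖ := Wbound κ hκ hε hε1 hεk i₀
  have hV : ‖∑ j, GreenD κ (-(ε • (EuclideanSpace.single 2 (1:ℝ) : E3))) i₀ j * (q j : ℂ)‖
      = |q i₀| * ‖W‖ := by
    rw [hcomp, norm_mul, Complex.norm_real, Real.norm_eq_abs]
  -- chain of lower bounds
  have hM : M ≤ |q i₀| * ‖W‖ := by
    have h1 : C/(2*ε) ≤ C/(2*ε^3) := by
      apply div_le_div_of_nonneg_left hCpos.le (by positivity)
      nlinarith [mul_le_mul_of_nonneg_left hε1 (mul_pos hε hε).le,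
        mul_le_mul_of_nonneg_left hε1 hε.le]
    have h2 : T < C/(2*ε) := by
      rw [lt_div_iff₀ (by positivity)]
      rw [lt_div_iff₀ (by positivity)] at hεT
      nlinarith [hεT]
    have h3 : C/(2*ε^3) = (1/2) * (C/ε^3) := by
      ring
    have h4 : (1/2) * (C/ε^3) ≤ |q i₀| * ‖W‖ := by
      apply mul_le_mul hqabs hWb (by positivity) (abs_nonneg _)
    have h5 : M ≤ T := le_max_left M 1
    linarith
  calc M ≤ |q i₀| * ‖W‖ := hM
    _ = Real.sqrt ((|q i₀| * ‖W‖)^2) := by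
        rw [Real.sqrt_sq (by positivity)]
    _ ≤ _ := by
        apply Real.sqrt_le_sqrt
        rw [← hV]
        exact Finset.single_le_sum (f := fun i => ‖
          (∑ j, GreenD κ (-(ε • (EuclideanSpace.single 2 (1:ℝ) : E3))) i j * (q j : ℂ))‖ ^ 2)
          (fun i _ => sq_nonneg _) (Finset.mem_univ i₀)

end Stmt17
end
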